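/- arXiv:2101.01764 — 3 statements merged into one kernel-verified Lean document; each statement's English description precedes it below -/
import Mathlib

section
/- Let (M,F) be an n-dimensional AR-Finsler manifold with n ≥ 2. Then ∂̇_k log η = (1/(n−1))·a^{ji}(∂̇_i a_{jk} − ∂̇_k a_{ij}); consequently ∂̇_k log(η(x,y)) is a rational function in y for each k. -/
def IsRat {n : ℕ} (U : Set (Fin n → ℝ)) (f : (Fin n → ℝ) → ℝ) : Prop :=
  ∃ P Q : MvPolynomial (Fin n) ℝ, Q ≠ 0 ∧
    ∀ y ∈ U, f y * MvPolynomial.eval y Q = MvPolynomial.eval y P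

noncomputable def pd {n : ℕ} (i : Fin n) (f : (Fin n → ℝ) → ℝ) (y : Fin n → ℝ) : ℝ :=
  fderiv ℝ f y (Pi.single i 1)

open MvPolynomial in
theorem hasFDerivAt_evalP {n : ℕ} (P : MvPolynomial (Fin n) ℝ) : ∀ y : Fin n → ℝ,
    HasFDerivAt (fun z => eval z P)
      (∑ i, eval y (pderiv i P) • (ContinuousLinearMap.proj i : (Fin n → ℝ) →L[ℝ] ℝ)) y := by
  induction P using MvPolynomial.induction_on with
  | C a =>
    intro y
    simp only [eval_C, pderiv_C, map_zero, zero_smul, Finset.sum_const_zero]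
    exact hasFDerivAt_const a y
  | add p q hp hq =>
    intro y
    simp only [map_add, eval_add, add_smul, Finset.sum_add_distrib]
    exact (hp y).add (hq y)
  | mul_X p j hp =>
    intro y
    have h1 : HasFDerivAt (fun z : Fin n → ℝ => z j)
        (ContinuousLinearMap.proj j : (Fin n → ℝ) →L[ℝ] ℝ) y :=
      ((ContinuousLinearMap.proj j : (Fin n → ℝ) →L[ℝ] ℝ)).hasFDerivAt.congr_fderiv rfl
    have h2 := (hp y).fun_mul h1
    have : (fun z : Fin n → ℝ => eval z p * z j) = fun z => eval z (p * X j) := by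
      funext z; simp
    rw [this] at h2
    refine h2.congr_fderiv ?_
    refine ContinuousLinearMap.ext fun (v : Fin n → ℝ) => ?_
    simp only [ContinuousLinearMap.sum_apply, ContinuousLinearMap.smul_apply,
      ContinuousLinearMap.proj_apply, ContinuousLinearMap.add_apply, smul_eq_mul,
      pderiv_mul, eval_add, eval_mul, eval_X, pderiv_X, Pi.single_apply, apply_ite,
      map_zero, mul_ite, mul_one, mul_zero, ite_mul, zero_mul]
    have hx : ∀ x ∈ Finset.univ, (if j = x then ((eval y) ((pderiv x) p) * y j + (eval y) p) * v x
        else ((eval y) ((pderiv x) p) * y j + 0) * v x)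
          = y j * ((eval y) ((pderiv x) p) * v x) + (if j = x then (eval y) p * v x else 0) := by
      intro x _; split_ifs <;> ring
    rw [Finset.sum_congr rfl hx, Finset.sum_add_distrib, ← Finset.mul_sum,
      Finset.sum_ite_eq Finset.univ j (fun x => (eval y) p * v x)]
    simp only [Finset.mem_univ, if_true]
    ring

open MvPolynomial in
theorem diff_evalP {n : ℕ} (P : MvPolynomial (Fin n) ℝ) :
    Differentiable ℝ (fun z : Fin n → ℝ => eval z P) :=
  fun y => (hasFDerivAt_evalP P y).differentiableAt

open MvPolynomial in
theorem pd_evalP {n : ℕ} (i : Fin n) (P : MvPolynomial (Fin n) ℝ) (y : Fin n → ℝ) :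
    pd i (fun z => eval z P) y = eval y (pderiv i P) := by
  rw [pd, (hasFDerivAt_evalP P y).fderiv]
  simp only [ContinuousLinearMap.sum_apply, ContinuousLinearMap.smul_apply,
    ContinuousLinearMap.proj_apply, smul_eq_mul, Pi.single_apply, mul_ite, mul_one, mul_zero]
  rw [Finset.sum_ite_eq' Finset.univ i (fun x => eval y (pderiv x P))]
  simp

theorem IsRat.congr {n : ℕ} {U : Set (Fin n → ℝ)} {f g : (Fin n → ℝ) → ℝ}
    (h : IsRat U g) (hfg : ∀ y ∈ U, f y = g y) : IsRat U f := by
  obtain ⟨P, Q, hQ, hPQ⟩ := h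
  exact ⟨P, Q, hQ, fun y hy => by rw [hfg y hy]; exact hPQ y hy⟩

theorem isRat_const {n : ℕ} {U : Set (Fin n → ℝ)} (c : ℝ) : IsRat U (fun _ => c) :=
  ⟨MvPolynomial.C c, 1, one_ne_zero, fun y _ => by simp⟩

theorem IsRat.mul {n : ℕ} {U : Set (Fin n → ℝ)} {f g : (Fin n → ℝ) → ℝ}
    (hf : IsRat U f) (hg : IsRat U g) : IsRat U (fun y => f y * g y) := by
  obtain ⟨P1, Q1, hQ1, h1⟩ := hf
  obtain ⟨P2, Q2, hQ2, h2⟩ := hg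
  refine ⟨P1 * P2, Q1 * Q2, mul_ne_zero hQ1 hQ2, fun y hy => ?_⟩
  simp only [map_mul]
  calc f y * g y * (MvPolynomial.eval y Q1 * MvPolynomial.eval y Q2)
      = (f y * MvPolynomial.eval y Q1) * (g y * MvPolynomial.eval y Q2) := by ring
    _ = _ := by rw [h1 y hy, h2 y hy]

theorem IsRat.add {n : ℕ} {U : Set (Fin n → ℝ)} {f g : (Fin n → ℝ) → ℝ}
    (hf : IsRat U f) (hg : IsRat U g) : IsRat U (fun y => f y + g y) := by
  obtain ⟨P1, Q1, hQ1, h1⟩ := hf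
  obtain ⟨P2, Q2, hQ2, h2⟩ := hg
  refine ⟨P1 * Q2 + P2 * Q1, Q1 * Q2, mul_ne_zero hQ1 hQ2, fun y hy => ?_⟩
  simp only [map_mul, map_add]
  calc (f y + g y) * (MvPolynomial.eval y Q1 * MvPolynomial.eval y Q2)
      = (f y * MvPolynomial.eval y Q1) * MvPolynomial.eval y Q2
        + (g y * MvPolynomial.eval y Q2) * MvPolynomial.eval y Q1 := by ring
    _ = _ := by rw [h1 y hy, h2 y hy]

theorem IsRat.neg {n : ℕ} {U : Set (Fin n → ℝ)} {f : (Fin n → ℝ) → ℝ}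
    (hf : IsRat U f) : IsRat U (fun y => -(f y)) := by
  obtain ⟨P1, Q1, hQ1, h1⟩ := hf
  exact ⟨-P1, Q1, hQ1, fun y hy => by simp [← h1 y hy]⟩

theorem IsRat.sub {n : ℕ} {U : Set (Fin n → ℝ)} {f g : (Fin n → ℝ) → ℝ}
    (hf : IsRat U f) (hg : IsRat U g) : IsRat U (fun y => f y - g y) := by
  have := hf.add hg.neg
  exact this.congr (fun y _ => by simp [sub_eq_add_neg])

theorem isRat_sum {n : ℕ} {U : Set (Fin n → ℝ)} {ι : Type*} (s : Finset ι)
    (f : ι → (Fin n → ℝ) → ℝ) (h : ∀ i ∈ s, IsRat U (f i)) :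
    IsRat U (fun y => ∑ i ∈ s, f i y) := by
  classical
  induction s using Finset.induction_on with
  | empty => exact (isRat_const 0).congr (fun y _ => by simp)
  | insert x s hx ih =>
    have := (h x (Finset.mem_insert_self x s)).add
      (ih (fun i hi => h i (Finset.mem_insert_of_mem hi)))
    exact this.congr (fun y _ => by rw [Finset.sum_insert hx])

theorem isRat_prod {n : ℕ} {U : Set (Fin n → ℝ)} {ι : Type*} (s : Finset ι)
    (f : ι → (Fin n → ℝ) → ℝ) (h : ∀ i ∈ s, IsRat U (f i)) :
    IsRat U (fun y => ∏ i ∈ s, f i y) := by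
  classical
  induction s using Finset.induction_on with
  | empty => exact (isRat_const 1).congr (fun y _ => by simp)
  | insert x s hx ih =>
    have := (h x (Finset.mem_insert_self x s)).mul
      (ih (fun i hi => h i (Finset.mem_insert_of_mem hi)))
    exact this.congr (fun y _ => by rw [Finset.prod_insert hx])

open MvPolynomial in
theorem IsRat.pd_isRat {n : ℕ} {U : Set (Fin n → ℝ)} (hU : IsOpen U) {f : (Fin n → ℝ) → ℝ}
    (hfd : Differentiable ℝ f) (hf : IsRat U f) (i : Fin n) : IsRat U (pd i f) := by
  obtain ⟨P, Q, hQ, hPQ⟩ := hf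
  refine ⟨pderiv i P * Q - P * pderiv i Q, Q * Q, mul_ne_zero hQ hQ, fun y hy => ?_⟩
  have heq : (fun z => f z * eval z Q) =ᶠ[nhds y] (fun z => eval z P) := by
    filter_upwards [hU.mem_nhds hy] with z hz using hPQ z hz
  have hfd1 := heq.fderiv_eq (𝕜 := ℝ)
  rw [fderiv_fun_mul (𝕜 := ℝ) (hfd y) (diff_evalP Q y), (hasFDerivAt_evalP Q y).fderiv,
    (hasFDerivAt_evalP P y).fderiv] at hfd1
  have happ := congrArg (fun L : (Fin n → ℝ) →L[ℝ] ℝ => L (Pi.single i 1)) hfd1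
  simp only [ContinuousLinearMap.add_apply, ContinuousLinearMap.smul_apply,
    ContinuousLinearMap.sum_apply, ContinuousLinearMap.proj_apply, smul_eq_mul,
    Pi.single_apply, mul_ite, mul_one, mul_zero] at happ
  rw [Finset.sum_ite_eq' Finset.univ i, Finset.sum_ite_eq' Finset.univ i] at happ
  simp only [Finset.mem_univ, if_true] at happ
  -- happ : f y * eval y (pderiv i Q) + eval y Q * (fderiv ℝ f y) (single i 1) = eval y (pderiv i P)
  have hpd : eval y Q * pd i f y = eval y (pderiv i P) - f y * eval y (pderiv i Q) := by
    rw [pd]; linarith [happ]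
  simp only [map_mul, map_sub]
  calc pd i f y * (eval y Q * eval y Q)
      = (eval y Q * pd i f y) * eval y Q := by ring
    _ = (eval y (pderiv i P) - f y * eval y (pderiv i Q)) * eval y Q := by rw [hpd]
    _ = eval y (pderiv i P) * eval y Q - (f y * eval y Q) * eval y (pderiv i Q) := by ring
    _ = _ := by rw [hPQ y hy]

open MvPolynomial in
theorem exists_eval_ne_zero {n : ℕ} {U : Set (Fin n → ℝ)} (hU : IsOpen U) (hne : U.Nonempty)
    {Q : MvPolynomial (Fin n) ℝ} (hQ : Q ≠ 0) : ∃ y ∈ U, eval y Q ≠ 0 := by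
  by_contra hcon
  push_neg at hcon
  apply hQ
  obtain ⟨y₀, hy₀⟩ := hne
  have hall : ∀ y₁ : Fin n → ℝ, eval y₁ Q = 0 := by
    intro y₁
    set path : ℝ → (Fin n → ℝ) := fun t => fun j => y₀ j + (y₁ j - y₀ j) * t with hpath
    set q : Polynomial ℝ :=
      eval₂ Polynomial.C (fun j => Polynomial.C (y₀ j) + Polynomial.C (y₁ j - y₀ j) * Polynomial.X) Q
      with hq
    have hqe : ∀ t : ℝ, Polynomial.eval t q = eval (path t) Q := by
      intro t
      rw [hq, show (Polynomial.eval t q = (Polynomial.evalRingHom t) q) from rfl]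
      rw [hq, eval₂_comp_left (Polynomial.evalRingHom t)]
      have h1 : (Polynomial.evalRingHom t).comp (Polynomial.C : ℝ →+* Polynomial ℝ)
          = RingHom.id ℝ := by ext x; simp
      rw [h1]
      have h2 : ((Polynomial.evalRingHom t) ∘ fun j =>
          Polynomial.C (y₀ j) + Polynomial.C (y₁ j - y₀ j) * Polynomial.X) = path t := by
        funext j; simp [hpath]
      rw [h2, eval₂_id]
    have hpathc : Continuous path := by
      apply continuous_pi
      intro j
      exact continuous_const.add (continuous_const.mul continuous_id)
    have hTopen : IsOpen {t : ℝ | path t ∈ U} := hU.preimage hpathc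
    have h0 : (0 : ℝ) ∈ {t : ℝ | path t ∈ U} := by
      have hp0 : path 0 = y₀ := by funext j; simp [hpath]
      simp only [Set.mem_setOf_eq, hp0]
      exact hy₀
    have hq0 : q = 0 := by
      apply Polynomial.eq_zero_of_infinite_isRoot
      obtain ⟨ε, hε, hball⟩ := Metric.isOpen_iff.mp hTopen 0 h0
      apply Set.Infinite.mono (s := Metric.ball (0:ℝ) ε)
      · intro t ht
        have := hball ht
        simp only [Set.mem_setOf_eq] at this
        simp only [Set.mem_setOf_eq, Polynomial.IsRoot, hqe t, hcon _ this]
      · rw [Real.ball_eq_Ioo]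
        exact Set.Ioo_infinite (by linarith)
    have := hqe 1
    rw [hq0] at this
    simp only [Polynomial.eval_zero] at this
    have hp1 : path 1 = y₁ := by funext j; simp [hpath]
    rw [hp1] at this
    exact this.symm
  have : ∀ x, eval x Q = eval x (0 : MvPolynomial (Fin n) ℝ) := by simp [hall]
  exact MvPolynomial.funext this

theorem isRat_det {n : ℕ} {U : Set (Fin n → ℝ)} (M : (Fin n → ℝ) → Matrix (Fin n) (Fin n) ℝ)
    (hM : ∀ i j, IsRat U (fun y => M y i j)) : IsRat U (fun y => (M y).det) := by
  have hdet : ∀ y, (M y).det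
      = ∑ σ : Equiv.Perm (Fin n), ((Equiv.Perm.sign σ : ℤ) : ℝ) * ∏ i, M y (σ i) i :=
    fun y => Matrix.det_apply' (M y)
  refine IsRat.congr ?_ (fun y _ => hdet y)
  refine isRat_sum Finset.univ _ (fun σ _ => ?_)
  exact (isRat_const _).mul (isRat_prod Finset.univ _ (fun i _ => hM (σ i) i))

theorem isRat_adjugate {n : ℕ} {U : Set (Fin n → ℝ)} (M : (Fin n → ℝ) → Matrix (Fin n) (Fin n) ℝ)
    (hM : ∀ i j, IsRat U (fun y => M y i j)) (i j : Fin n) :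
    IsRat U (fun y => (M y).adjugate i j) := by
  have hadj : ∀ y, (M y).adjugate i j = ((M y).updateRow j (Pi.single i 1)).det :=
    fun y => Matrix.adjugate_apply (M y) i j
  refine IsRat.congr (isRat_det (fun y => (M y).updateRow j (Pi.single i 1)) ?_)
    (fun y _ => hadj y)
  intro p q
  by_cases hp : p = j
  · refine (isRat_const ((Pi.single i 1 : Fin n → ℝ) q)).congr (fun y _ => ?_)
    show Matrix.updateRow (M y) j (Pi.single i 1) p q = _
    rw [Matrix.updateRow_apply, if_pos hp]
  · refine (hM p q).congr (fun y _ => ?_)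
    show Matrix.updateRow (M y) j (Pi.single i 1) p q = _
    rw [Matrix.updateRow_apply, if_neg hp]

theorem pd_log {n : ℕ} {η : (Fin n → ℝ) → ℝ} (hηd : Differentiable ℝ η) {y : Fin n → ℝ}
    (hy : η y ≠ 0) (k : Fin n) :
    pd k (fun z => Real.log (η z)) y = pd k η y / η y := by
  have h := (Real.hasDerivAt_log hy).comp_hasFDerivAt y (hηd y).hasFDerivAt
  have : (fun z => Real.log (η z)) = Real.log ∘ η := rfl
  rw [pd, this, h.fderiv]
  simp only [ContinuousLinearMap.smul_apply, smul_eq_mul]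
  rw [pd, div_eq_inv_mul]

open MvPolynomial in
/-- For an `n`-dimensional AR-Finsler manifold (`n ≥ 2`), with `g_{ij} = η a_{ij}`,
`(a^{ij})` the inverse matrix of `(a_{ij})`, and using the total symmetry of the Cartan
torsion `2C_{ijk} = η ∂̇_k a_{ij} + a_{ij} ∂̇_k η`, one has
`∂̇_k log η = (1/(n−1)) a^{ji}(∂̇_i a_{jk} − ∂̇_k a_{ij})`; consequently each
`∂̇_k log η` is a rational function in `y`. -/
theorem stmt3 {n : ℕ} (hn : 2 ≤ n) (U : Set (Fin n → ℝ)) (hU : IsOpen U)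
    (η : (Fin n → ℝ) → ℝ) (a aInv : Fin n → Fin n → (Fin n → ℝ) → ℝ)
    (hη : ∀ y ∈ U, 0 < η y) (hηd : Differentiable ℝ η)
    (had : ∀ i j, Differentiable ℝ (a i j))
    (ha : ∀ i j, IsRat U (a i j))
    (hasym : ∀ i j, ∀ y ∈ U, a i j y = a j i y)
    (hInv : ∀ y ∈ U, ∀ j k, ∑ i, a j i y * aInv i k y = if j = k then (1:ℝ) else 0)
    (hCsym : ∀ i j k, ∀ y ∈ U,
      η y * pd i (a j k) y + a j k y * pd i η y
        = η y * pd k (a i j) y + a i j y * pd k η y) :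
    ∀ k, (∀ y ∈ U,
        pd k (fun z => Real.log (η z)) y
          = (1 / ((n : ℝ) - 1)) * ∑ j, ∑ i, aInv j i y * (pd i (a j k) y - pd k (a i j) y))
      ∧ IsRat U (pd k (fun z => Real.log (η z))) := by
  intro k
  set A : (Fin n → ℝ) → Matrix (Fin n) (Fin n) ℝ := fun y => Matrix.of (fun i j => a i j y)
    with hAdef
  set B : (Fin n → ℝ) → Matrix (Fin n) (Fin n) ℝ := fun y => Matrix.of (fun i j => aInv i j y)
    with hBdef
  have hAB : ∀ y ∈ U, A y * B y = 1 := by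
    intro y hy; ext j l
    rw [Matrix.mul_apply, Matrix.one_apply]
    exact hInv y hy j l
  have hBA : ∀ y ∈ U, B y * A y = 1 := fun y hy => mul_eq_one_comm.mp (hAB y hy)
  have hdet : ∀ y ∈ U, (A y).det ≠ 0 := by
    intro y hy h0
    have hh := congrArg Matrix.det (hAB y hy)
    rw [Matrix.det_mul, Matrix.det_one, h0, zero_mul] at hh
    exact zero_ne_one hh
  have hn1 : ((n:ℝ) - 1) ≠ 0 := by
    have : (2:ℝ) ≤ (n:ℝ) := by exact_mod_cast hn
    linarith
  -- part 1 : the identity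
  have hid : ∀ y ∈ U, pd k (fun z => Real.log (η z)) y
      = (1 / ((n : ℝ) - 1)) * ∑ j, ∑ i, aInv j i y * (pd i (a j k) y - pd k (a i j) y) := by
    intro y hy
    have hηy := hη y hy
    set S1 := ∑ j, ∑ i, aInv j i y * pd i (a j k) y with hS1
    set S2 := ∑ j, ∑ i, aInv j i y * pd k (a i j) y with hS2
    have hsum : ∑ j, ∑ i, aInv j i y * (η y * pd i (a j k) y + a j k y * pd i η y)
        = ∑ j, ∑ i, aInv j i y * (η y * pd k (a i j) y + a i j y * pd k η y) :=
      Finset.sum_congr rfl fun j _ => Finset.sum_congr rfl fun i _ => by rw [hCsym i j k y hy]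
    have hT : ∑ j, ∑ i, aInv j i y * a j k y * pd i η y = pd k η y := by
      rw [Finset.sum_comm]
      have hrow : ∀ i, ∑ j, aInv j i y * a j k y * pd i η y
          = (if k = i then (1:ℝ) else 0) * pd i η y := by
        intro i
        rw [← Finset.sum_mul, ← hInv y hy k i]
        congr 1
        exact Finset.sum_congr rfl fun j _ => by rw [hasym j k y hy]; ring
      simp_rw [hrow]
      simp only [ite_mul, one_mul, zero_mul]
      rw [Finset.sum_ite_eq Finset.univ k (fun i => pd i η y)]
      simp
    have hL : ∑ j, ∑ i, aInv j i y * (η y * pd i (a j k) y + a j k y * pd i η y)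
        = η y * S1 + pd k η y := by
      calc ∑ j, ∑ i, aInv j i y * (η y * pd i (a j k) y + a j k y * pd i η y)
          = ∑ j, ∑ i, (η y * (aInv j i y * pd i (a j k) y)
              + aInv j i y * a j k y * pd i η y) :=
            Finset.sum_congr rfl fun j _ => Finset.sum_congr rfl fun i _ => by ring
        _ = (∑ j, ∑ i, η y * (aInv j i y * pd i (a j k) y))
              + ∑ j, ∑ i, aInv j i y * a j k y * pd i η y := by
            simp only [Finset.sum_add_distrib]
        _ = η y * S1 + pd k η y := by
            rw [hT, hS1, Finset.mul_sum]
            congr 1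
            exact Finset.sum_congr rfl fun j _ => (Finset.mul_sum _ _ _).symm
    have hT2 : ∑ j, ∑ i, aInv j i y * a i j y * pd k η y = (n:ℝ) * pd k η y := by
      have hrow : ∀ j, ∑ i, aInv j i y * a i j y = 1 := by
        intro j
        have h1 : (B y * A y) j j = (1 : Matrix (Fin n) (Fin n) ℝ) j j := by rw [hBA y hy]
        rw [Matrix.mul_apply, Matrix.one_apply_eq] at h1
        exact h1
      have : ∀ j, ∑ i, aInv j i y * a i j y * pd k η y = pd k η y := by
        intro j
        rw [← Finset.sum_mul, hrow j, one_mul]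
      simp_rw [this]
      rw [Finset.sum_const, Finset.card_univ, Fintype.card_fin, nsmul_eq_mul]
    have hR : ∑ j, ∑ i, aInv j i y * (η y * pd k (a i j) y + a i j y * pd k η y)
        = η y * S2 + (n:ℝ) * pd k η y := by
      calc ∑ j, ∑ i, aInv j i y * (η y * pd k (a i j) y + a i j y * pd k η y)
          = ∑ j, ∑ i, (η y * (aInv j i y * pd k (a i j) y)
              + aInv j i y * a i j y * pd k η y) :=
            Finset.sum_congr rfl fun j _ => Finset.sum_congr rfl fun i _ => by ring
        _ = (∑ j, ∑ i, η y * (aInv j i y * pd k (a i j) y))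
              + ∑ j, ∑ i, aInv j i y * a i j y * pd k η y := by
            simp only [Finset.sum_add_distrib]
        _ = η y * S2 + (n:ℝ) * pd k η y := by
            rw [hT2, hS2, Finset.mul_sum]
            congr 1
            exact Finset.sum_congr rfl fun j _ => (Finset.mul_sum _ _ _).symm
    have key : η y * S1 + pd k η y = η y * S2 + (n:ℝ) * pd k η y := by
      rw [← hL, hsum, hR]
    have h3 : η y * S1 - η y * S2 = (n:ℝ) * pd k η y - pd k η y := by linarith
    have h4 : η y * (S1 - S2) = ((n:ℝ) - 1) * pd k η y := by
      rw [mul_sub, sub_mul, one_mul]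
      exact h3
    have hsub : ∑ j, ∑ i, aInv j i y * (pd i (a j k) y - pd k (a i j) y) = S1 - S2 := by
      rw [hS1, hS2, ← Finset.sum_sub_distrib]
      refine Finset.sum_congr rfl fun j _ => ?_
      rw [← Finset.sum_sub_distrib]
      exact Finset.sum_congr rfl fun i _ => by ring
    rw [pd_log hηd (ne_of_gt hηy) k, hsub]
    field_simp
    linear_combination -h3
  refine ⟨hid, ?_⟩
  -- part 2 : rationality
  have hInvRat : ∀ i j, IsRat U (aInv i j) := by
    by_cases hne : U.Nonempty
    · intro i j
      have hBdet : ∀ y ∈ U, aInv i j y * (A y).det = (A y).adjugate i j := by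
        intro y hy
        have hBinv : (A y)⁻¹ = B y := Matrix.inv_eq_right_inv (hAB y hy)
        have h5 : B y i j = ((A y).det)⁻¹ * (A y).adjugate i j := by
          rw [← hBinv, Matrix.inv_def, Ring.inverse_eq_inv, Matrix.smul_apply, smul_eq_mul]
        have h6 : aInv i j y = ((A y).det)⁻¹ * (A y).adjugate i j := h5
        rw [h6]
        field_simp [hdet y hy]
      obtain ⟨Pd, Qd, hQd, hd⟩ := isRat_det A (fun p q => ha p q)
      obtain ⟨Pc, Qc, hQc, hc⟩ := isRat_adjugate A (fun p q => ha p q) i j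
      have hPd : Pd ≠ 0 := by
        intro h0
        obtain ⟨y, hy, hQy⟩ := exists_eval_ne_zero hU hne hQd
        have hdy : (A y).det * eval y Qd = eval y Pd := hd y hy
        rw [h0, map_zero] at hdy
        rcases mul_eq_zero.mp hdy with h | h
        · exact hdet y hy h
        · exact hQy h
      refine ⟨Pc * Qd, Pd * Qc, mul_ne_zero hPd hQc, fun y hy => ?_⟩
      have h1 : (A y).det * eval y Qd = eval y Pd := hd y hy
      have h2 : (A y).adjugate i j * eval y Qc = eval y Pc := hc y hy
      have h3 : aInv i j y * (A y).det = (A y).adjugate i j := hBdet y hy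
      simp only [map_mul]
      calc aInv i j y * (eval y Pd * eval y Qc)
          = aInv i j y * (A y).det * eval y Qd * eval y Qc := by rw [← h1]; ring
        _ = (A y).adjugate i j * eval y Qc * eval y Qd := by rw [h3]; ring
        _ = eval y Pc * eval y Qd := by rw [h2]
    · intro i j
      exact ⟨0, 1, one_ne_zero, fun y hy => absurd ⟨y, hy⟩ hne⟩
  refine IsRat.congr (g := fun y =>
    (1 / ((n : ℝ) - 1)) * ∑ j, ∑ i, aInv j i y * (pd i (a j k) y - pd k (a i j) y)) ?_ hid
  exact (isRat_const _).mul (isRat_sum _ _ fun j _ => isRat_sum _ _ fun i _ =>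
    (hInvRat j i).mul ((IsRat.pd_isRat hU (had j k) (ha j k) i).sub
      (IsRat.pd_isRat hU (had i j) (ha i j) k)))
end

section
/- A regular AR-Finsler manifold (M,F) is Riemannian if and only if ∂̇_i log η = −(1/n)·a^{jk}·∂̇_i a_{jk} for all i. -/
/-- A regular AR-Finsler manifold, with `g_{ij} = η a_{ij}` and Cartan torsion
`C_{ijk} = η ∂̇_i a_{jk} + a_{jk} ∂̇_i η` (up to a constant factor), is Riemannian
(i.e. `C_{ijk} ≡ 0`) if and only if `∂̇_i log η = −(1/n) a^{jk} ∂̇_i a_{jk}`.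
Regularity is used through Deicke's theorem: vanishing of the mean Cartan torsion
`I_i = g^{jk} C_{ijk}` implies vanishing of the Cartan torsion. -/
theorem stmt7 {n : ℕ} (hn : 0 < n) (U : Set (Fin n → ℝ)) (hU : IsOpen U)
    (η : (Fin n → ℝ) → ℝ) (a aInv : Fin n → Fin n → (Fin n → ℝ) → ℝ)
    (hη : ∀ y ∈ U, 0 < η y) (hηd : Differentiable ℝ η)
    (had : ∀ i j, Differentiable ℝ (a i j))
    (hasym : ∀ i j, ∀ y ∈ U, a i j y = a j i y)
    (hInv : ∀ y ∈ U, ∀ j k, ∑ i, a j i y * aInv i k y = if j = k then (1:ℝ) else 0)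
    (hDeicke : (∀ i, ∀ y ∈ U,
        ∑ j, ∑ k, (aInv j k y / η y) * (η y * pd i (a j k) y + a j k y * pd i η y) = 0) →
      ∀ i j k, ∀ y ∈ U, η y * pd i (a j k) y + a j k y * pd i η y = 0) :
    (∀ i j k, ∀ y ∈ U, η y * pd i (a j k) y + a j k y * pd i η y = 0) ↔
      (∀ i, ∀ y ∈ U,
        pd i (fun z => Real.log (η z)) y
          = -(1 / (n : ℝ)) * ∑ j, ∑ k, aInv j k y * pd i (a j k) y) := by
  have hn' : (n : ℝ) ≠ 0 := Nat.cast_ne_zero.mpr hn.ne'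
  have key : ∀ i, ∀ y ∈ U, pd i (fun z => Real.log (η z)) y = pd i η y / η y := by
    intro i y hy
    have hne : η y ≠ 0 := (hη y hy).ne'
    have h1 : HasFDerivAt η (fderiv ℝ η y) y := (hηd y).hasFDerivAt
    have h2 : HasDerivAt Real.log (η y)⁻¹ (η y) := Real.hasDerivAt_log hne
    have h3 : HasFDerivAt (fun z => Real.log (η z)) ((η y)⁻¹ • fderiv ℝ η y) y :=
      h2.comp_hasFDerivAt y h1
    unfold pd
    rw [h3.fderiv]
    simp [div_eq_inv_mul]
  have trace : ∀ y ∈ U, ∑ j, ∑ k, aInv j k y * a j k y = (n : ℝ) := by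
    intro y hy
    rw [Finset.sum_comm]
    have : ∀ k : Fin n, ∑ j, aInv j k y * a j k y = 1 := by
      intro k
      have := hInv y hy k k
      simp only [if_true, eq_self_iff_true] at this
      rw [← this]
      exact Finset.sum_congr rfl fun j _ => by rw [hasym j k y hy]; ring
    simp [this]
  constructor
  · intro h i y hy
    rw [key i y hy]
    have hne : η y ≠ 0 := (hη y hy).ne'
    have hpd : ∀ j k, pd i (a j k) y = -(a j k y * pd i η y) / η y := by
      intro j k
      have := h i j k y hy
      field_simp
      linarith
    have hs : ∑ j, ∑ k, aInv j k y * pd i (a j k) y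
        = -(pd i η y / η y) * ∑ j, ∑ k, aInv j k y * a j k y := by
      rw [Finset.mul_sum]
      refine Finset.sum_congr rfl fun j _ => ?_
      rw [Finset.mul_sum]
      refine Finset.sum_congr rfl fun k _ => ?_
      rw [hpd j k]
      ring
    rw [hs, trace y hy]
    field_simp
  · intro h
    apply hDeicke
    intro i y hy
    have hne : η y ≠ 0 := (hη y hy).ne'
    have hlog := h i y hy
    rw [key i y hy] at hlog
    have expand : ∀ j k : Fin n,
        (aInv j k y / η y) * (η y * pd i (a j k) y + a j k y * pd i η y)
          = aInv j k y * pd i (a j k) y + (pd i η y / η y) * (aInv j k y * a j k y) := by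
      intro j k; field_simp
    have hsum : ∑ j, ∑ k, (aInv j k y / η y) * (η y * pd i (a j k) y + a j k y * pd i η y)
        = (∑ j, ∑ k, aInv j k y * pd i (a j k) y)
          + (pd i η y / η y) * (∑ j, ∑ k, aInv j k y * a j k y) := by
      rw [Finset.mul_sum, ← Finset.sum_add_distrib]
      refine Finset.sum_congr rfl fun j _ => ?_
      rw [Finset.mul_sum, ← Finset.sum_add_distrib]
      exact Finset.sum_congr rfl fun k _ => expand j k
    rw [hsum, trace y hy, hlog]
    field_simp
    ring
end

section
/- A regular AR-Finsler manifold (M,F) of dimension n ≥ 2 is Riemannian if and only if a^{jk}(n·∂̇_k a_{ji} − ∂̇_i a_{jk}) = 0 for all i. -/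
/-- A regular AR-Finsler manifold of dimension `n ≥ 2` is Riemannian (vanishing Cartan
torsion `C_{ijk} = η ∂̇_i a_{jk} + a_{jk} ∂̇_i η`) if and only if
`a^{jk}(n ∂̇_k a_{ji} − ∂̇_i a_{jk}) = 0` for all `i`.  Regularity enters via Deicke's
theorem, and the total symmetry of the Cartan torsion is used. -/
theorem stmt8 {n : ℕ} (hn : 2 ≤ n) (U : Set (Fin n → ℝ)) (hU : IsOpen U)
    (η : (Fin n → ℝ) → ℝ) (a aInv : Fin n → Fin n → (Fin n → ℝ) → ℝ)
    (hη : ∀ y ∈ U, 0 < η y) (hηd : Differentiable ℝ η)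
    (had : ∀ i j, Differentiable ℝ (a i j))
    (hasym : ∀ i j, ∀ y ∈ U, a i j y = a j i y)
    (hInv : ∀ y ∈ U, ∀ j k, ∑ i, a j i y * aInv i k y = if j = k then (1:ℝ) else 0)
    (hCsym : ∀ i j k, ∀ y ∈ U,
      η y * pd i (a j k) y + a j k y * pd i η y
        = η y * pd k (a i j) y + a i j y * pd k η y)
    (hDeicke : (∀ i, ∀ y ∈ U,
        ∑ j, ∑ k, (aInv j k y / η y) * (η y * pd i (a j k) y + a j k y * pd i η y) = 0) →
      ∀ i j k, ∀ y ∈ U, η y * pd i (a j k) y + a j k y * pd i η y = 0) :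
    (∀ i j k, ∀ y ∈ U, η y * pd i (a j k) y + a j k y * pd i η y = 0) ↔
      (∀ i, ∀ y ∈ U,
        ∑ j, ∑ k, aInv j k y * ((n : ℝ) * pd k (a j i) y - pd i (a j k) y) = 0) := by
  have pdsym : ∀ y ∈ U, ∀ (m j i : Fin n), pd m (a j i) y = pd m (a i j) y := by
    intro y hy m j i
    unfold pd
    have : fderiv ℝ (a j i) y = fderiv ℝ (a i j) y :=
      Filter.EventuallyEq.fderiv_eq
        (Filter.eventuallyEq_of_mem (hU.mem_nhds hy) (fun z hz => hasym j i z hz))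
    rw [this]
  constructor
  · intro h i y hy
    have hη0 : η y ≠ 0 := (hη y hy).ne'
    have inv1 : ∀ (i' k : Fin n), ∑ j, aInv j k y * a j i' y = if i' = k then (1:ℝ) else 0 := by
      intro i' k
      rw [← hInv y hy i' k]
      exact Finset.sum_congr rfl fun j _ => by rw [hasym j i' y hy]; ring
    have key : ∀ (j k m : Fin n), η y * pd m (a j k) y = -(a j k y * pd m η y) := by
      intro j k m
      have := h m j k y hy
      linarith
    have hs : η y * (∑ j, ∑ k, aInv j k y * ((n : ℝ) * pd k (a j i) y - pd i (a j k) y)) = 0 := by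
      rw [Finset.mul_sum]
      have step : ∀ j : Fin n,
          η y * ∑ k, aInv j k y * ((n : ℝ) * pd k (a j i) y - pd i (a j k) y)
          = ∑ k, (-(n : ℝ) * (pd k η y * (aInv j k y * a j i y))
              + pd i η y * (aInv j k y * a j k y)) := by
        intro j
        rw [Finset.mul_sum]
        refine Finset.sum_congr rfl fun k _ => ?_
        have h1 : η y * pd k (a j i) y = -(a j i y * pd k η y) := key j i k
        have h2 : η y * pd i (a j k) y = -(a j k y * pd i η y) := key j k i
        have e : η y * (aInv j k y * ((n : ℝ) * pd k (a j i) y - pd i (a j k) y))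
            = aInv j k y * ((n : ℝ) * (η y * pd k (a j i) y) - η y * pd i (a j k) y) := by ring
        rw [e, h1, h2]; ring
      simp only [step]
      rw [Finset.sum_comm]
      have perk : ∀ k : Fin n,
          ∑ j, (-(n : ℝ) * (pd k η y * (aInv j k y * a j i y))
              + pd i η y * (aInv j k y * a j k y))
          = -(n : ℝ) * (pd k η y * (if i = k then (1:ℝ) else 0)) + pd i η y := by
        intro k
        rw [Finset.sum_add_distrib]
        congr 1
        · rw [← Finset.mul_sum, ← Finset.mul_sum, inv1 i k]
        · rw [← Finset.mul_sum, inv1 k k]; simp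
      simp only [perk]
      rw [Finset.sum_add_distrib]
      have t1 : ∑ k, -(n : ℝ) * (pd k η y * (if i = k then (1:ℝ) else 0)) = -(n:ℝ) * pd i η y := by
        simp [mul_ite]
      have t2 : ∑ _k : Fin n, pd i η y = (n:ℝ) * pd i η y := by
        rw [Finset.sum_const, Finset.card_univ, Fintype.card_fin, nsmul_eq_mul]
      rw [t1, t2]; ring
    exact (mul_eq_zero.mp hs).resolve_left hη0
  · intro h
    apply hDeicke
    intro i y hy
    have hη0 : η y ≠ 0 := (hη y hy).ne'
    have inv1 : ∀ (i' k : Fin n), ∑ j, aInv j k y * a j i' y = if i' = k then (1:ℝ) else 0 := by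
      intro i' k
      rw [← hInv y hy i' k]
      exact Finset.sum_congr rfl fun j _ => by rw [hasym j i' y hy]; ring
    have hS := h i y hy
    have claim : η y * (∑ j, ∑ k, aInv j k y * pd i (a j k) y) + (n:ℝ) * pd i η y = 0 := by
      have hmul : η y * (∑ j, ∑ k, aInv j k y * ((n : ℝ) * pd k (a j i) y - pd i (a j k) y)) = 0 := by
        rw [hS, mul_zero]
      rw [Finset.mul_sum] at hmul
      have step : ∀ j : Fin n,
          η y * ∑ k, aInv j k y * ((n : ℝ) * pd k (a j i) y - pd i (a j k) y)
          = ∑ k, (((n:ℝ) - 1) * (η y * (aInv j k y * pd i (a j k) y))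
              + (n:ℝ) * (pd i η y * (aInv j k y * a j k y))
              - (n:ℝ) * (pd k η y * (aInv j k y * a j i y))) := by
        intro j
        rw [Finset.mul_sum]
        refine Finset.sum_congr rfl fun k _ => ?_
        have hps : pd k (a j i) y = pd k (a i j) y := pdsym y hy k j i
        have hc := hCsym i j k y hy
        rw [hasym i j y hy] at hc
        have hkey : η y * pd k (a j i) y
            = η y * pd i (a j k) y + a j k y * pd i η y - a j i y * pd k η y := by
          rw [hps]; linarith
        have e : η y * (aInv j k y * ((n : ℝ) * pd k (a j i) y - pd i (a j k) y))
            = aInv j k y * ((n : ℝ) * (η y * pd k (a j i) y) - η y * pd i (a j k) y) := by ring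
        rw [e, hkey]; ring
      simp only [step] at hmul
      simp only [Finset.sum_add_distrib, Finset.sum_sub_distrib] at hmul
      have e1 : ∑ j : Fin n, ∑ k, (n:ℝ) * (pd i η y * (aInv j k y * a j k y))
          = (n:ℝ) * ((n:ℝ) * pd i η y) := by
        rw [Finset.sum_comm]
        have t : ∀ k : Fin n, ∑ j, (n:ℝ) * (pd i η y * (aInv j k y * a j k y))
            = (n:ℝ) * pd i η y := by
          intro k
          rw [← Finset.mul_sum, ← Finset.mul_sum, inv1 k k]
          simp
        simp only [t]
        rw [Finset.sum_const, Finset.card_univ, Fintype.card_fin, nsmul_eq_mul]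
      have e2 : ∑ j : Fin n, ∑ k, (n:ℝ) * (pd k η y * (aInv j k y * a j i y))
          = (n:ℝ) * pd i η y := by
        rw [Finset.sum_comm]
        have t : ∀ k : Fin n, ∑ j, (n:ℝ) * (pd k η y * (aInv j k y * a j i y))
            = (n:ℝ) * (pd k η y * (if i = k then (1:ℝ) else 0)) := by
          intro k
          rw [← Finset.mul_sum, ← Finset.mul_sum, inv1 i k]
        simp only [t, mul_ite, mul_one, mul_zero]
        simp
      have e3 : ∑ j : Fin n, ∑ k, ((n:ℝ) - 1) * (η y * (aInv j k y * pd i (a j k) y))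
          = ((n:ℝ) - 1) * (η y * ∑ j, ∑ k, aInv j k y * pd i (a j k) y) := by
        simp only [Finset.mul_sum]
      rw [e1, e2, e3] at hmul
      have hn1 : ((n:ℝ) - 1) ≠ 0 := by
        have : (2:ℝ) ≤ (n:ℝ) := by exact_mod_cast hn
        linarith
      have hz : ((n:ℝ) - 1) * (η y * (∑ j, ∑ k, aInv j k y * pd i (a j k) y) + (n:ℝ) * pd i η y) = 0 := by
        linarith [hmul]
      exact (mul_eq_zero.mp hz).resolve_left hn1
    have goalmul : η y * (∑ j, ∑ k, (aInv j k y / η y) * (η y * pd i (a j k) y + a j k y * pd i η y))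
        = η y * (∑ j, ∑ k, aInv j k y * pd i (a j k) y) + (n:ℝ) * pd i η y := by
      rw [Finset.mul_sum]
      have step : ∀ j : Fin n,
          η y * ∑ k, (aInv j k y / η y) * (η y * pd i (a j k) y + a j k y * pd i η y)
          = ∑ k, (η y * (aInv j k y * pd i (a j k) y) + pd i η y * (aInv j k y * a j k y)) := by
        intro j
        rw [Finset.mul_sum]
        refine Finset.sum_congr rfl fun k _ => ?_
        field_simp
      simp only [step]
      simp only [Finset.sum_add_distrib]
      congr 1
      · simp only [Finset.mul_sum]
      · rw [Finset.sum_comm]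
        have t : ∀ k : Fin n, ∑ j, pd i η y * (aInv j k y * a j k y) = pd i η y := by
          intro k
          rw [← Finset.mul_sum, inv1 k k]
          simp
        simp only [t]
        rw [Finset.sum_const, Finset.card_univ, Fintype.card_fin, nsmul_eq_mul]
    have hz : η y * (∑ j, ∑ k, (aInv j k y / η y) * (η y * pd i (a j k) y + a j k y * pd i η y)) = 0 := by
      rw [goalmul, claim]
    exact (mul_eq_zero.mp hz).resolve_left hη0
end
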